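/- arXiv:2109.01925 — 2 statements merged into one kernel-verified Lean document; each statement's English description precedes it below -/
import Mathlib

section
/- For all integers d > ℓ ≥ 1 and any additive valuation, ℓ · MMS^{1,d}(M) ≤ MMS^{ℓ,d}(M) ≤ ℓ · MMS^{1,d-ℓ+1}(M). -/
open Finset

variable {α : Type*} [DecidableEq α]

/-- A partition of `M` into `d` (possibly empty) bundles. -/
def IsPartition (M : Finset α) (d : ℕ) (P : Fin d → Finset α) : Prop :=
  (∀ i j, i ≠ j → Disjoint (P i) (P j)) ∧ Finset.univ.biUnion P = M

/-- The ℓ-out-of-d maximin share: the maximum over d-partitions of M of the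
minimum over unions of ℓ parts of the total value. -/
noncomputable def MMS (v : α → ℝ) (M : Finset α) (l d : ℕ) : ℝ :=
  sSup { x | ∃ P : Fin d → Finset α, IsPartition M d P ∧
    x = sInf { y | ∃ S : Finset (Fin d), S.card = l ∧ y = ∑ i ∈ S, ∑ g ∈ P i, v g } }

def innerSet (v : α → ℝ) {d : ℕ} (P : Fin d → Finset α) (l : ℕ) : Set ℝ :=
  { y | ∃ S : Finset (Fin d), S.card = l ∧ y = ∑ i ∈ S, ∑ g ∈ P i, v g }

def outerSet (v : α → ℝ) (M : Finset α) (l d : ℕ) : Set ℝ :=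
  { x | ∃ P : Fin d → Finset α, IsPartition M d P ∧ x = sInf (innerSet v P l) }

lemma MMS_eq (v : α → ℝ) (M : Finset α) (l d : ℕ) :
    MMS v M l d = sSup (outerSet v M l d) := rfl

lemma innerSet_eq_coe (v : α → ℝ) {d : ℕ} (P : Fin d → Finset α) (l : ℕ) :
    innerSet v P l =
      ↑((Finset.univ.powersetCard l).image fun S => ∑ i ∈ S, ∑ g ∈ P i, v g) := by
  ext y
  simp [innerSet, Finset.mem_powersetCard, eq_comm]

lemma innerSet_finite (v : α → ℝ) {d : ℕ} (P : Fin d → Finset α) (l : ℕ) :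
    (innerSet v P l).Finite := by
  rw [innerSet_eq_coe]; exact Finset.finite_toSet _

lemma innerSet_nonempty (v : α → ℝ) {d : ℕ} (P : Fin d → Finset α) {l : ℕ}
    (h : l ≤ d) : (innerSet v P l).Nonempty := by
  obtain ⟨S, -, hS⟩ := Finset.exists_subset_card_eq (s := (Finset.univ : Finset (Fin d))) (n := l)
    (by simpa using h)
  exact ⟨_, S, hS, rfl⟩

lemma mem_innerSet (v : α → ℝ) {d : ℕ} (P : Fin d → Finset α) {l : ℕ}
    {S : Finset (Fin d)} (hS : S.card = l) :
    (∑ i ∈ S, ∑ g ∈ P i, v g) ∈ innerSet v P l := ⟨S, hS, rfl⟩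

lemma part_subset {M : Finset α} {d : ℕ} {P : Fin d → Finset α}
    (hP : IsPartition M d P) (i : Fin d) : P i ⊆ M := by
  rw [← hP.2]; exact Finset.subset_biUnion_of_mem P (Finset.mem_univ i)

lemma val_nonneg {v : α → ℝ} {M : Finset α} {d : ℕ} {P : Fin d → Finset α}
    (hv : ∀ g ∈ M, 0 ≤ v g) (hP : IsPartition M d P) (i : Fin d) :
    0 ≤ ∑ g ∈ P i, v g :=
  Finset.sum_nonneg fun g hg => hv g (part_subset hP i hg)

lemma sum_parts {v : α → ℝ} {M : Finset α} {d : ℕ} {P : Fin d → Finset α}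
    (hP : IsPartition M d P) :
    ∑ i : Fin d, ∑ g ∈ P i, v g = ∑ g ∈ M, v g := by
  rw [← hP.2]
  exact (Finset.sum_biUnion (fun i _ j _ hij => hP.1 i j hij)).symm

lemma outer_nonempty (v : α → ℝ) (M : Finset α) (l : ℕ) {d : ℕ} (hd : 0 < d) :
    (outerSet v M l d).Nonempty := by
  refine ⟨_, fun i => if i = ⟨0, hd⟩ then M else ∅, ⟨?_, ?_⟩, rfl⟩
  · intro i j hij
    rcases eq_or_ne i ⟨0, hd⟩ with hi | hi
    · rcases eq_or_ne j ⟨0, hd⟩ with hj | hj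
      · exact absurd (hi.trans hj.symm) hij
      · simp [hi, hj]
    · simp [hi]
  · apply Finset.Subset.antisymm
    · intro g hg
      simp only [Finset.mem_biUnion] at hg
      obtain ⟨i, -, hg⟩ := hg
      split at hg
      · exact hg
      · simp at hg
    · intro g hg
      exact Finset.mem_biUnion.2 ⟨⟨0, hd⟩, Finset.mem_univ _, by simp [hg]⟩

lemma outer_bddAbove {v : α → ℝ} {M : Finset α} (hv : ∀ g ∈ M, 0 ≤ v g)
    {l d : ℕ} (hld : l ≤ d) : BddAbove (outerSet v M l d) := by
  refine ⟨∑ g ∈ M, v g, ?_⟩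
  rintro x ⟨P, hP, rfl⟩
  obtain ⟨S, -, hS⟩ := Finset.exists_subset_card_eq (s := (Finset.univ : Finset (Fin d))) (n := l)
    (by simpa using hld)
  calc sInf (innerSet v P l) ≤ ∑ i ∈ S, ∑ g ∈ P i, v g :=
        csInf_le (innerSet_finite v P l).bddBelow (mem_innerSet v P hS)
    _ ≤ ∑ i : Fin d, ∑ g ∈ P i, v g :=
        Finset.sum_le_sum_of_subset_of_nonneg (Finset.subset_univ S)
          (fun i _ _ => val_nonneg hv hP i)
    _ = ∑ g ∈ M, v g := sum_parts hP

theorem mms_l_out_of_d_bounds (v : α → ℝ) (M : Finset α) (l d : ℕ)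
    (hv : ∀ g ∈ M, 0 ≤ v g) (hl : 1 ≤ l) (hld : l < d) :
    (l : ℝ) * MMS v M 1 d ≤ MMS v M l d ∧
    MMS v M l d ≤ (l : ℝ) * MMS v M 1 (d - l + 1) := by
  have hd : 0 < d := lt_of_le_of_lt (Nat.zero_le l) hld
  have hlpos : (0 : ℝ) < l := by exact_mod_cast hl
  have hle : l ≤ d := hld.le
  have h1d : 1 ≤ d := hl.trans hle
  constructor
  · -- first inequality
    rw [MMS_eq, MMS_eq, mul_comm, ← le_div_iff₀ hlpos]
    apply csSup_le (outer_nonempty v M 1 hd)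
    rintro x ⟨P, hP, rfl⟩
    rw [le_div_iff₀ hlpos, mul_comm]
    have hb : sInf (innerSet v P l) ∈ outerSet v M l d := ⟨P, hP, rfl⟩
    refine le_trans ?_ (le_csSup (outer_bddAbove hv hle) hb)
    apply le_csInf (innerSet_nonempty v P hle)
    rintro y ⟨S, hS, rfl⟩
    have : ∀ i ∈ S, sInf (innerSet v P 1) ≤ ∑ g ∈ P i, v g := by
      intro i _
      refine csInf_le (innerSet_finite v P 1).bddBelow ⟨{i}, ?_, ?_⟩ <;> simp
    calc (l : ℝ) * sInf (innerSet v P 1)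
        = ∑ _i ∈ S, sInf (innerSet v P 1) := by
          rw [Finset.sum_const, hS, nsmul_eq_mul]
      _ ≤ ∑ i ∈ S, ∑ g ∈ P i, v g := Finset.sum_le_sum this
  · -- second inequality
    have hd' : 1 ≤ d - l + 1 := Nat.le_add_left 1 (d - l)
    rw [MMS_eq, MMS_eq]
    apply csSup_le (outer_nonempty v M l hd)
    rintro x ⟨P, hP, rfl⟩
    -- choose a minimizing l-subset S
    have hne : ((Finset.univ : Finset (Fin d)).powersetCard l).Nonempty :=
      Finset.powersetCard_nonempty.2 (by simpa using hle)
    obtain ⟨S, hSmem, hSmin⟩ := Finset.exists_min_image _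
      (fun S => ∑ i ∈ S, ∑ g ∈ P i, v g) hne
    have hScard : S.card = l := (Finset.mem_powersetCard.1 hSmem).2
    set fS : ℝ := ∑ i ∈ S, ∑ g ∈ P i, v g with hfS
    have hx_le : sInf (innerSet v P l) ≤ fS :=
      csInf_le (innerSet_finite v P l).bddBelow (mem_innerSet v P hScard)
    have hfS_nonneg : 0 ≤ fS :=
      Finset.sum_nonneg fun i _ => val_nonneg hv hP i
    -- swap property
    have hswap : ∀ j ∉ S, ∀ i ∈ S, (∑ g ∈ P i, v g) ≤ ∑ g ∈ P j, v g := by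
      intro j hj i hi
      have hjei : j ∉ S.erase i := fun h => hj (Finset.mem_of_mem_erase h)
      have hcard' : (insert j (S.erase i)).card = l := by
        rw [Finset.card_insert_of_notMem hjei, Finset.card_erase_of_mem hi, hScard]
        omega
      have h1 : fS ≤ ∑ k ∈ insert j (S.erase i), ∑ g ∈ P k, v g :=
        hSmin _ (Finset.mem_powersetCard.2 ⟨Finset.subset_univ _, hcard'⟩)
      rw [Finset.sum_insert hjei] at h1
      have h2 : (∑ g ∈ P i, v g) + ∑ k ∈ S.erase i, ∑ g ∈ P k, v g = fS := by
        rw [hfS]; exact Finset.add_sum_erase S (fun k => ∑ g ∈ P k, v g) hi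
      linarith
    have hout : ∀ j ∉ S, fS ≤ (l : ℝ) * ∑ g ∈ P j, v g := by
      intro j hj
      calc fS ≤ ∑ _i ∈ S, ∑ g ∈ P j, v g :=
            Finset.sum_le_sum fun i hi => hswap j hj i hi
        _ = (l : ℝ) * ∑ g ∈ P j, v g := by
            rw [Finset.sum_const, hScard, nsmul_eq_mul]
    -- build the merged partition
    have hcompl : Sᶜ.card = d - l := by
      rw [Finset.card_compl, hScard, Fintype.card_fin]
    set e := Sᶜ.orderIsoOfFin hcompl with he
    set Q : Fin (d - l + 1) → Finset α := fun k =>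
      if h : (k : ℕ) < d - l then P (e ⟨k, h⟩) else S.biUnion P with hQ
    have hlast : ∀ k : Fin (d - l + 1), ¬ (k : ℕ) < d - l → (k : ℕ) = d - l :=
      fun k h => by have := k.2; omega
    have hQpart : IsPartition M (d - l + 1) Q := by
      constructor
      · intro k₁ k₂ hk
        have hvne : (k₁ : ℕ) ≠ (k₂ : ℕ) := fun h => hk (Fin.ext h)
        by_cases h1 : (k₁ : ℕ) < d - l <;> by_cases h2 : (k₂ : ℕ) < d - l
        · simp only [hQ, dif_pos h1, dif_pos h2]
          apply hP.1
          intro h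
          apply hvne
          have := e.injective (Subtype.ext h)
          exact congrArg (fun x : Fin (d - l) => x.val) this
        · simp only [hQ, dif_pos h1, dif_neg h2]
          rw [Finset.disjoint_biUnion_right]
          intro i hi
          apply hP.1
          intro h
          have : (e ⟨k₁, h1⟩ : Fin d) ∈ Sᶜ := (e ⟨k₁, h1⟩).2
          rw [h] at this
          exact (Finset.mem_compl.1 this) hi
        · simp only [hQ, dif_neg h1, dif_pos h2]
          rw [Finset.disjoint_biUnion_left]
          intro i hi
          apply hP.1
          intro h
          have : (e ⟨k₂, h2⟩ : Fin d) ∈ Sᶜ := (e ⟨k₂, h2⟩).2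
          rw [← h] at this
          exact (Finset.mem_compl.1 this) hi
        · exact absurd ((hlast k₁ h1).trans (hlast k₂ h2).symm) hvne
      · apply Finset.Subset.antisymm
        · intro g hg
          simp only [Finset.mem_biUnion] at hg
          obtain ⟨k, -, hg⟩ := hg
          simp only [hQ] at hg
          split at hg
          · exact part_subset hP _ hg
          · obtain ⟨i, -, hg⟩ := Finset.mem_biUnion.1 hg
            exact part_subset hP _ hg
        · intro g hg
          rw [← hP.2] at hg
          obtain ⟨i, -, hg⟩ := Finset.mem_biUnion.1 hg
          by_cases hi : i ∈ S
          · refine Finset.mem_biUnion.2 ⟨⟨d - l, Nat.lt_succ_self _⟩, Finset.mem_univ _, ?_⟩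
            simp only [hQ, dif_neg (lt_irrefl (d - l))]
            exact Finset.mem_biUnion.2 ⟨i, hi, hg⟩
          · set k := e.symm ⟨i, Finset.mem_compl.2 hi⟩ with hk
            refine Finset.mem_biUnion.2 ⟨⟨(k : ℕ), k.2.trans (Nat.lt_succ_self _)⟩,
              Finset.mem_univ _, ?_⟩
            simp only [hQ, dif_pos (show ((⟨(k : ℕ), _⟩ : Fin (d - l + 1)) : ℕ) < d - l from k.2)]
            have : e ⟨(k : ℕ), k.2⟩ = ⟨i, Finset.mem_compl.2 hi⟩ := by
              rw [Fin.eta]; exact e.apply_symm_apply _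
            rw [show (⟨((⟨(k : ℕ), k.2.trans (Nat.lt_succ_self _)⟩ : Fin (d-l+1)) : ℕ), k.2⟩ : Fin (d - l)) = ⟨(k : ℕ), k.2⟩ from rfl, this]
            exact hg
    -- each part of Q has value ≥ fS / l
    have hQval : ∀ k : Fin (d - l + 1), fS / l ≤ ∑ g ∈ Q k, v g := by
      intro k
      by_cases h : (k : ℕ) < d - l
      · simp only [hQ, dif_pos h]
        rw [div_le_iff₀ hlpos, mul_comm]
        exact hout _ (Finset.mem_compl.1 (e ⟨k, h⟩).2)
      · simp only [hQ, dif_neg h]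
        have : ∑ g ∈ S.biUnion P, v g = fS :=
          Finset.sum_biUnion (fun i _ j _ hij => hP.1 i j hij)
        rw [this]
        exact div_le_self hfS_nonneg (by exact_mod_cast hl)
    have hc : sInf (innerSet v Q 1) ∈ outerSet v M 1 (d - l + 1) := ⟨Q, hQpart, rfl⟩
    have hge : fS / l ≤ sInf (innerSet v Q 1) := by
      apply le_csInf (innerSet_nonempty v Q hd')
      rintro y ⟨S', hS', rfl⟩
      obtain ⟨k, rfl⟩ := Finset.card_eq_one.1 hS'
      rw [Finset.sum_singleton]
      exact hQval k
    calc sInf (innerSet v P l) ≤ fS := hx_le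
      _ ≤ (l : ℝ) * sInf (innerSet v Q 1) := by
          rw [← div_le_iff₀' hlpos]; exact hge
      _ ≤ (l : ℝ) * sSup (outerSet v M 1 (d - l + 1)) :=
          mul_le_mul_of_nonneg_left (le_csSup (outer_bddAbove hv hd') hc) hlpos.le
end

section
/- General key combinatorial step of Proposition 5: let d ≥ 1 and for j ∈ [d²], let B_j be the family of subsets of M = {g_1,...,g_{2^{d²}−1}} containing strictly more than half the goods of {g_1,...,g_{2^j−1}}. If (A_1, A_2) is a partition of M and A_1 ∈ ⋂_{j=1}^d B_{(i_1−1)d+j} for some i_1 ∈ [d], then for every i_2 ∈ [d], A_2 ∉ ⋂_{j=1}^d B_{(j−1)d+i_2}. -/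
open Finset

/-- `X` contains a majority of the goods `g_1, …, g_{2^j − 1}` (represented by the
indices `0, …, 2^j − 2` of `Fin (2^(d^2) − 1)`). -/
def InB (d : ℕ) (j : ℕ) (X : Finset (Fin (2 ^ (d ^ 2) - 1))) : Prop :=
  ((2 : ℚ) ^ j - 1) / 2 <
    ((X.filter (fun i : Fin (2 ^ (d ^ 2) - 1) => (i : ℕ) < 2 ^ j - 1)).card : ℚ)

lemma card_filter_val_lt (N m : ℕ) (h : m ≤ N) :
    ((univ : Finset (Fin N)).filter (fun i : Fin N => (i : ℕ) < m)).card = m := by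
  conv_rhs => rw [← Finset.card_range m]
  refine Finset.card_bij (fun i _ => (i : ℕ)) ?_ ?_ ?_
  · intro a ha; simpa using (Finset.mem_filter.mp ha).2
  · intro a _ b _ hab; exact Fin.val_injective hab
  · intro b hb
    simp only [Finset.mem_range] at hb
    exact ⟨⟨b, lt_of_lt_of_le hb h⟩, by simp [hb], rfl⟩

theorem responsive_construction_general (d : ℕ) (hd : 1 ≤ d)
    (A₁ A₂ : Finset (Fin (2 ^ (d ^ 2) - 1)))
    (hdisj : Disjoint A₁ A₂) (hunion : A₁ ∪ A₂ = Finset.univ)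
    (i₁ : ℕ) (hi₁ : 1 ≤ i₁ ∧ i₁ ≤ d)
    (hA₁ : ∀ j, 1 ≤ j → j ≤ d → InB d ((i₁ - 1) * d + j) A₁) :
    ∀ i₂, 1 ≤ i₂ → i₂ ≤ d → ¬ (∀ j, 1 ≤ j → j ≤ d → InB d ((j - 1) * d + i₂) A₂) := by
  intro i₂ hi₂1 hi₂2 hA₂
  set k := (i₁ - 1) * d + i₂ with hk
  have h1 : InB d k A₁ := hA₁ i₂ hi₂1 hi₂2
  have h2 : InB d k A₂ := hA₂ i₁ hi₁.1 hi₁.2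
  have hdd : (d - 1) * d + d = d ^ 2 := by
    cases d with
    | zero => omega
    | succ n => simp [Nat.succ_sub_one]; ring
  have hkd : k ≤ d ^ 2 := by
    have h' : (i₁ - 1) * d + i₂ ≤ (d - 1) * d + d := by gcongr; omega
    omega
  have hm : 2 ^ k - 1 ≤ 2 ^ (d ^ 2) - 1 := by
    have := Nat.pow_le_pow_right (by norm_num : 1 ≤ 2) hkd
    omega
  have hcard : ((univ : Finset (Fin (2 ^ (d ^ 2) - 1))).filter
      (fun i : Fin (2 ^ (d ^ 2) - 1) => (i : ℕ) < 2 ^ k - 1)).card = 2 ^ k - 1 :=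
    card_filter_val_lt _ _ hm
  set P : Fin (2 ^ (d ^ 2) - 1) → Prop := fun i => (i : ℕ) < 2 ^ k - 1 with hP
  have hsub : (A₁.filter P).card + (A₂.filter P).card = 2 ^ k - 1 := by
    calc (A₁.filter P).card + (A₂.filter P).card
        = ((A₁.filter P) ∪ (A₂.filter P)).card :=
          (Finset.card_union_of_disjoint (Finset.disjoint_filter_filter hdisj)).symm
      _ = ((univ : Finset (Fin (2 ^ (d ^ 2) - 1))).filter P).card := by
          rw [← Finset.filter_union, hunion]
      _ = 2 ^ k - 1 := hcard
  have hcast : ((2 ^ k - 1 : ℕ) : ℚ) = (2 : ℚ) ^ k - 1 := by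
    push_cast [Nat.one_le_two_pow]
    ring
  unfold InB at h1 h2
  have hadd := add_lt_add h1 h2
  rw [← add_div] at hadd
  have hlt : (2 : ℚ) ^ k - 1 < ((A₁.filter P).card : ℚ) + ((A₂.filter P).card : ℚ) := by
    calc (2:ℚ)^k - 1 = ((2:ℚ)^k - 1 + ((2:ℚ)^k - 1)) / 2 := by ring
      _ < _ := hadd
  have hfin : (2 ^ k - 1 : ℕ) < (A₁.filter P).card + (A₂.filter P).card := by
    have : ((2 ^ k - 1 : ℕ) : ℚ) < (((A₁.filter P).card + (A₂.filter P).card : ℕ) : ℚ) := by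
      rw [hcast]; push_cast; exact hlt
    exact_mod_cast this
  omega
end
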